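/- Let K be a locally finitely presentable category whose full subcategory K_ω of finitely presentable objects is closed under finite limits, and let T_i be the codensity monad of the inclusion i : K_ω ⊂ K. Then there is an adjunction between the Eilenberg–Moore category Alg(T_i) and the Pro-completion Pro K_ω, with right adjoint C : Pro K_ω → Alg(T_i) lifting the restricted Isbell functor 𝒮 : Pro K_ω → K ≃ Ind K_ω. -/

import Mathlib

/-! STATEMENT 6: for a locally finitely presentable category `K` whose finitely presentable
objects `K_ω` are closed under finite limits, there is an adjunction between the
Eilenberg-Moore category of the codensity monad `T_i` of `i : K_ω ⊂ K` and `Pro K_ω`, whose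
right adjoint `C` lifts the restricted Isbell functor `𝒮 : Pro K_ω ⥤ K ≃ Ind K_ω`. -/

namespace CategoryTheory

open Functor Limits

noncomputable section

universe w w₂ v v₂ u u₂

namespace Codensity

variable {C : Type u} [Category.{v} C] {D : Type u₂} [Category.{v₂} D]
  (F : C ⥤ D) [F.HasRightKanExtension F]

/-- The underlying endofunctor of the codensity monad of `F`: the right Kan
extension of `F` along itself. -/
abbrev T : D ⥤ D := F.rightKanExtension F

/-- The counit of the right Kan extension. -/
abbrev ε : F ⋙ T F ⟶ F := F.rightKanExtensionCounit F

/-- The unit of the codensity monad. -/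
def unit : 𝟭 D ⟶ T F :=
  (T F).liftOfIsRightKanExtension (ε F) (𝟭 D) F.rightUnitor.hom

/-- The multiplication of the codensity monad. -/
def mul : T F ⋙ T F ⟶ T F :=
  (T F).liftOfIsRightKanExtension (ε F) (T F ⋙ T F)
    ((Functor.associator F (T F) (T F)).inv ≫ whiskerRight (ε F) (T F) ≫ ε F)

lemma unit_fac (X : C) : (unit F).app (F.obj X) ≫ (ε F).app X = 𝟙 (F.obj X) := by
  simp [unit]

lemma mul_fac (X : C) :
    (mul F).app (F.obj X) ≫ (ε F).app X
      = (T F).map ((ε F).app X) ≫ (ε F).app X := by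
  have h := (T F).liftOfIsRightKanExtension_fac_app (ε F)
    (T F ⋙ T F) ((Functor.associator F (T F) (T F)).inv ≫ whiskerRight (ε F) (T F) ≫ ε F) X
  simp only [NatTrans.comp_app, Functor.associator_inv_app, whiskerRight_app,
    Functor.comp_obj, Category.id_comp] at h
  simpa [mul] using h

lemma left_unit' : whiskerLeft (T F) (unit F) ≫ mul F = (T F).rightUnitor.hom := by
  apply (T F).hom_ext_of_isRightKanExtension (ε F)
  ext X
  have h := (unit F).naturality ((ε F).app X)
  simp only [Functor.comp_obj, Functor.id_obj, Functor.id_map] at h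
  simp only [NatTrans.comp_app, whiskerLeft_app, Functor.rightUnitor_hom_app,
    Functor.comp_obj, Functor.id_obj, Category.id_comp, Category.assoc]
  rw [mul_fac, ← Category.assoc, ← h, Category.assoc, unit_fac]
  simp

lemma right_unit' : whiskerRight (unit F) (T F) ≫ mul F = (T F).leftUnitor.hom := by
  apply (T F).hom_ext_of_isRightKanExtension (ε F)
  ext X
  simp only [NatTrans.comp_app, whiskerRight_app, whiskerLeft_app, Functor.leftUnitor_hom_app,
    Functor.comp_obj, Functor.id_obj, Category.id_comp, Category.assoc]
  rw [mul_fac, ← Category.assoc, ← Functor.map_comp, unit_fac]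
  simp

lemma assoc' :
    whiskerRight (mul F) (T F) ≫ mul F
      = (Functor.associator _ _ _).hom ≫ whiskerLeft (T F) (mul F) ≫ mul F := by
  apply (T F).hom_ext_of_isRightKanExtension (ε F)
  ext X
  have h := (mul F).naturality ((ε F).app X)
  simp only [Functor.comp_obj, Functor.comp_map] at h
  simp only [NatTrans.comp_app, whiskerRight_app, whiskerLeft_app, Functor.associator_hom_app,
    Functor.comp_obj, Category.id_comp, Category.assoc]
  conv_lhs => rw [mul_fac, ← Category.assoc, ← Functor.map_comp, mul_fac, Functor.map_comp,
    Category.assoc]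
  conv_rhs => rw [mul_fac, ← Category.assoc, ← h, Category.assoc, mul_fac]

end Codensity

/-- The codensity monad of a functor `F`, defined as the right Kan extension of `F`
along itself, with its canonical monad structure. -/
def codensityMonad {C : Type u} [Category.{v} C] {D : Type u₂} [Category.{v₂} D]
    (F : C ⥤ D) [F.HasRightKanExtension F] : Monad D where
  toFunctor := Codensity.T F
  η := Codensity.unit F
  μ := Codensity.mul F
  left_unit X := by
    simpa using NatTrans.congr_app (Codensity.left_unit' F) X
  right_unit X := by
    simpa using NatTrans.congr_app (Codensity.right_unit' F) X
  assoc X := by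
    simpa using NatTrans.congr_app (Codensity.assoc' F) X

namespace Presheaf

/-- The restricted Yoneda functor `ℰ ⥤ Cᵒᵖ ⥤ Type v` along `A : C ⥤ ℰ` (no longer in Mathlib;
reinstated with its former definition). -/
def restrictedYoneda {C : Type u} [Category.{v} C] {ℰ : Type u₂} [Category.{v} ℰ]
    (A : C ⥤ ℰ) : ℰ ⥤ Cᵒᵖ ⥤ Type v :=
  yoneda ⋙ (whiskeringLeft _ _ (Type v)).obj (Functor.op A)

end Presheaf

end

end CategoryTheory

universe v' u'

open CategoryTheory Functor Limits

noncomputable section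

variable (K : Type v') [Category.{u'} K]

/-- An object is finitely presentable if its covariant hom-functor preserves filtered
colimits. -/
def FinitelyPresentable (k : K) : Prop :=
  PreservesFilteredColimitsOfSize.{u', u'} (coyoneda.obj (Opposite.op k))

/-- The full subcategory `K_ω ⊆ K` of finitely presentable objects. -/
abbrev KFin := ObjectProperty.FullSubcategory (fun k : K => FinitelyPresentable K k)

/-- The inclusion `i : K_ω ⥤ K`. -/
abbrev iFin : KFin K ⥤ K := ObjectProperty.ι _

/-- The copresheaf embedding of `K_ω`. -/
def ysharpFin : KFin K ⥤ (KFin K ⥤ Type u')ᵒᵖ := coyoneda.rightOp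

/-- The Pro-completion `Pro K_ω = (Lex(K_ω, Set))ᵒᵖ`. -/
abbrev ProFin := (ObjectProperty.FullSubcategory (fun Q : KFin K ⥤ Type u' => PreservesFiniteLimits Q))ᵒᵖ

/-- The inclusion `Pro K_ω ⊆ (Set^{K_ω})ᵒᵖ`. -/
abbrev iotaProFin : ProFin K ⥤ (KFin K ⥤ Type u')ᵒᵖ := (ObjectProperty.ι _).op

/-! ### Auxiliary constructions for the proof -/

section CodensityAlgebraGeneric

universe wa wb we ua ub ue wsm

variable {A₀ : Type ua} [Category.{wa} A₀] {B₀ : Type ub} [Category.{wb} B₀]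
  {E₀ : Type ue} [Category.{we} E₀]
variable (F : A₀ ⥤ B₀) [F.HasRightKanExtension F] (L : A₀ ⥤ E₀) [L.HasRightKanExtension F]

/-- The right Kan extension of `F` along `L`. -/
abbrev ranL : E₀ ⥤ B₀ := L.rightKanExtension F

/-- The counit of the right Kan extension of `F` along `L`. -/
abbrev counitL : L ⋙ ranL F L ⟶ F := L.rightKanExtensionCounit F

/-- The canonical action of the codensity monad of `F` on `Ran_L F`. -/
def sigmaL : ranL F L ⋙ Codensity.T F ⟶ ranL F L :=
  (ranL F L).liftOfIsRightKanExtension (counitL F L) (ranL F L ⋙ Codensity.T F)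
    ((Functor.associator L (ranL F L) (Codensity.T F)).inv ≫
      whiskerRight (counitL F L) (Codensity.T F) ≫ Codensity.ε F)

lemma sigmaL_fac (a : A₀) :
    (sigmaL F L).app (L.obj a) ≫ (counitL F L).app a
      = (Codensity.T F).map ((counitL F L).app a) ≫ (Codensity.ε F).app a := by
  have h := (ranL F L).liftOfIsRightKanExtension_fac_app (counitL F L)
    (ranL F L ⋙ Codensity.T F)
    ((Functor.associator L (ranL F L) (Codensity.T F)).inv ≫
      whiskerRight (counitL F L) (Codensity.T F) ≫ Codensity.ε F) a
  simp only [NatTrans.comp_app, Functor.associator_inv_app, whiskerRight_app,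
    Functor.comp_obj, Category.id_comp] at h
  simpa [sigmaL] using h

lemma sigmaL_unit (Q : E₀) :
    (Codensity.unit F).app ((ranL F L).obj Q) ≫ (sigmaL F L).app Q = 𝟙 _ := by
  have key : whiskerLeft (ranL F L) (Codensity.unit F) ≫ sigmaL F L
      = (ranL F L).rightUnitor.hom := by
    apply (ranL F L).hom_ext_of_isRightKanExtension (counitL F L)
    ext a
    have h := (Codensity.unit F).naturality ((counitL F L).app a)
    simp only [Functor.comp_obj, Functor.id_obj, Functor.id_map] at h
    simp only [NatTrans.comp_app, whiskerLeft_app, Functor.rightUnitor_hom_app,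
      Functor.comp_obj, Functor.id_obj, Category.id_comp, Category.assoc]
    rw [sigmaL_fac, ← Category.assoc, ← h, Category.assoc, Codensity.unit_fac]
    simp
  simpa using NatTrans.congr_app key Q

lemma sigmaL_assoc (Q : E₀) :
    (Codensity.mul F).app ((ranL F L).obj Q) ≫ (sigmaL F L).app Q
      = (Codensity.T F).map ((sigmaL F L).app Q) ≫ (sigmaL F L).app Q := by
  have key : (Functor.associator (ranL F L) (Codensity.T F) (Codensity.T F)).hom ≫
        whiskerLeft (ranL F L) (Codensity.mul F) ≫ sigmaL F L
      = whiskerRight (sigmaL F L) (Codensity.T F) ≫ sigmaL F L := by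
    apply (ranL F L).hom_ext_of_isRightKanExtension (counitL F L)
    ext a
    have hμ := (Codensity.mul F).naturality ((counitL F L).app a)
    simp only [Functor.comp_obj, Functor.comp_map] at hμ
    simp only [NatTrans.comp_app, whiskerLeft_app, whiskerRight_app, Functor.associator_hom_app,
      Functor.comp_obj, Category.id_comp, Category.assoc]
    conv_lhs => rw [sigmaL_fac, ← Category.assoc, ← hμ, Category.assoc, Codensity.mul_fac]
    conv_rhs => rw [sigmaL_fac, ← Category.assoc, ← Functor.map_comp, sigmaL_fac,
      Functor.map_comp, Category.assoc]
  simpa using NatTrans.congr_app key Q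

lemma codensityMonad_toFunctor : (codensityMonad F).toFunctor = Codensity.T F := rfl

lemma essSmallSA_aux {S : Type wsm} [SmallCategory S] (H : S ⥤ E₀) (Y : E₀)
    [hsm : ∀ s : S, Small.{wsm} (Y ⟶ H.obj s)] :
    EssentiallySmall.{wsm} (StructuredArrow Y H) := by
  haveI : Small.{wsm} (StructuredArrow Y H) :=
    small_of_surjective (f := fun p : Σ s : S, (Y ⟶ H.obj s) => StructuredArrow.mk p.2)
      (fun X => ⟨⟨X.right, X.hom⟩, (StructuredArrow.eq_mk X).symm⟩)
  haveI : LocallySmall.{wsm} (StructuredArrow Y H) :=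
    ⟨fun X X' => small_of_injective (f := fun ψ => ψ.right) (fun ψ ψ' h => by ext; exact h)⟩
  exact essentiallySmall_of_small_of_locallySmall _

end CodensityAlgebraGeneric

section Stmt6Aux

variable [HasLimitsOfSize.{u', u'} K] [EssentiallySmall.{u'} (KFin K)]
  [(iFin K).HasRightKanExtension (iFin K)]
  [(ysharpFin K).HasRightKanExtension (iFin K)]

/-- Closure of `K_ω` under finite limits, as in the statement. -/
abbrev HCl : Prop :=
  ∀ (J : Type u') (_ : SmallCategory J) (_ : FinCategory J) (D : J ⥤ K),
    (∀ j, FinitelyPresentable K (D.obj j)) → FinitelyPresentable K (limit D)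

lemma finitelyPresentable_of_iso {X Y : K} (e : X ≅ Y) (h : FinitelyPresentable K X) :
    FinitelyPresentable K Y := by
  have : PreservesFilteredColimitsOfSize.{u', u'} (coyoneda.obj (Opposite.op X)) := h
  constructor
  intro J _ _
  exact preservesColimitsOfShape_of_natIso (coyoneda.mapIso e.op).symm

instance : ObjectProperty.IsClosedUnderIsomorphisms (FinitelyPresentable K) :=
  ⟨fun e h => finitelyPresentable_of_iso K e h⟩

def isLimit_iFin_mapCone (hclosed : HCl K) {J : Type u'} [SmallCategory J] [FinCategory J]
    {D : J ⥤ KFin K} {c : Cone D} (hc : IsLimit c) :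
    IsLimit ((iFin K).mapCone c) := by
  haveI hcl : ObjectProperty.IsClosedUnderLimitsOfShape (FinitelyPresentable K) J :=
    ⟨fun X ⟨p⟩ => finitelyPresentable_of_iso K
      (IsLimit.conePointUniqueUpToIso (limit.isLimit _) p.isLimit)
      (show FinitelyPresentable K (limit p.diag) from hclosed J ‹_› ‹_› p.diag p.prop_diag_obj)⟩
  haveI : CreatesLimitsOfShape J (iFin K) := inferInstance
  exact isLimitOfPreserves (iFin K) hc

/-- The functor of algebra morphisms into the canonical algebras on fp objects. -/
@[simps]
def OFun (A : (codensityMonad (iFin K)).Algebra) : KFin K ⥤ Type u' where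
  obj a := { g : A.A ⟶ (iFin K).obj a //
    (Codensity.T (iFin K)).map g ≫ (Codensity.ε (iFin K)).app a = A.a ≫ g }
  map {a b} h := TypeCat.ofHom fun g => ⟨g.1 ≫ (iFin K).map h, by
    have hn := (Codensity.ε (iFin K)).naturality h
    simp only [Functor.comp_map] at hn
    erw [Functor.map_comp, Category.assoc, hn, ← Category.assoc, g.2, Category.assoc]; rfl⟩
  map_id a := by
    refine ConcreteCategory.hom_ext _ _ fun g => ?_
    apply Subtype.ext
    show g.1 ≫ (iFin K).map (𝟙 a) = g.1
    rw [CategoryTheory.Functor.map_id, Category.comp_id]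
  map_comp h h' := by
    refine ConcreteCategory.hom_ext _ _ fun g => ?_
    apply Subtype.ext
    show g.1 ≫ (iFin K).map (h ≫ h') = (g.1 ≫ (iFin K).map h) ≫ (iFin K).map h'
    rw [Functor.map_comp, ← Category.assoc]

/-- The cone over `D ⋙ iFin K` extracted from an element of a cone over `D ⋙ OFun K A`. -/
@[simps]
def OCone (A : (codensityMonad (iFin K)).Algebra) {J : Type u'} [SmallCategory J]
    {D : J ⥤ KFin K} (s : Cone (D ⋙ OFun K A)) (x : s.pt) : Cone (D ⋙ iFin K) where
  pt := A.A
  π :=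
    { app := fun j => Subtype.val (s.π.app j x)
      naturality := fun j j' f => by
        dsimp
        have hx := ConcreteCategory.congr_hom (s.π.naturality f) x
        dsimp at hx
        rw [Category.id_comp, hx]
        rfl }

/-- `OFun K A` maps limit cones to limit cones. -/
def OisLimit (A : (codensityMonad (iFin K)).Algebra) {J : Type u'} [SmallCategory J]
    {D : J ⥤ KFin K} {c : Cone D} (hic : IsLimit ((iFin K).mapCone c)) :
    IsLimit ((OFun K A).mapCone c) where
  lift s := TypeCat.ofHom fun x => ⟨hic.lift (OCone K A s x), by
    apply hic.hom_ext
    intro j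
    have hn := (Codensity.ε (iFin K)).naturality (c.π.app j)
    simp only [Functor.comp_map, Functor.const_obj_obj] at hn
    have hfac := hic.fac (OCone K A s x) j
    simp only [Functor.mapCone_pt, Functor.mapCone_π_app, OCone_pt, OCone_π_app] at hfac
    simp only [Functor.mapCone_pt, Functor.mapCone_π_app, Category.assoc]
    erw [← hn, ← Category.assoc, ← Functor.map_comp, hfac, Subtype.property (s.π.app j x), ← hfac]
    exact (Category.assoc _ _ _).symm⟩
  fac s j := by
    refine ConcreteCategory.hom_ext _ _ fun x => ?_
    apply Subtype.ext
    have := hic.fac (OCone K A s x) j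
    exact this
  uniq s m hm := by
    refine ConcreteCategory.hom_ext _ _ fun x => ?_
    apply Subtype.ext
    apply hic.uniq (OCone K A s x) (Subtype.val (m x))
    intro j
    have := congrArg Subtype.val (ConcreteCategory.congr_hom (hm j) x)
    exact this

lemma OFun_lex (hclosed : HCl K) (A : (codensityMonad (iFin K)).Algebra) :
    PreservesFiniteLimits (OFun K A) := by
  apply preservesFiniteLimits_of_preservesFiniteLimitsOfSize.{u'}
  intro J _ _
  exact { preservesLimit := fun {D} =>
    { preserves := fun {c} hc => ⟨OisLimit K A (isLimit_iFin_mapCone K hclosed hc)⟩ } }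

/-- Morphisms of algebras induce morphisms of `OFun`s. -/
@[simps]
def OMap {A B : (codensityMonad (iFin K)).Algebra} (f : A ⟶ B) : OFun K B ⟶ OFun K A where
  app a := TypeCat.ofHom fun g => ⟨f.f ≫ g.1, by
    rw [Functor.map_comp, Category.assoc, g.2, ← Category.assoc]
    have hf : (Codensity.T (iFin K)).map f.f ≫ B.a = A.a ≫ f.f := f.h
    exact (Category.assoc _ _ _).symm.trans (eq_whisker hf g.1)⟩
  naturality a b h := by refine ConcreteCategory.hom_ext _ _ fun g => ?_; apply Subtype.ext; exact (Category.assoc _ _ _).symm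

lemma OMap_id (A : (codensityMonad (iFin K)).Algebra) : OMap K (𝟙 A) = 𝟙 (OFun K A) := by
  ext a x
  apply Subtype.ext
  show (𝟙 A : A ⟶ A).f ≫ x.1 = x.1
  rw [Monad.Algebra.id_f, Category.id_comp]

lemma OMap_comp {A B C' : (codensityMonad (iFin K)).Algebra} (f : A ⟶ B) (g : B ⟶ C') :
    OMap K (f ≫ g) = OMap K g ≫ OMap K f := by
  ext a x
  apply Subtype.ext
  show (f ≫ g).f ≫ x.1 = f.f ≫ (g.f ≫ x.1)
  rw [Monad.Algebra.comp_f, Category.assoc]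

/-- The left adjoint `L : Alg(T_i) ⥤ Pro K_ω`. -/
@[simps]
def LFun (hclosed : HCl K) : (codensityMonad (iFin K)).Algebra ⥤ ProFin K where
  obj A := Opposite.op ⟨OFun K A, OFun_lex K hclosed A⟩
  map {A B} f := (ObjectProperty.homMk (OMap K f)).op
  map_id A := by rw [OMap_id]; rfl
  map_comp f g := by rw [OMap_comp]; rfl

/-- The right adjoint `C : Pro K_ω ⥤ Alg(T_i)`, lifting the restricted Isbell functor. -/
@[simps]
def CFun : ProFin K ⥤ (codensityMonad (iFin K)).Algebra where
  obj Q :=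
    { A := (ranL (iFin K) (ysharpFin K)).obj ((iotaProFin K).obj Q)
      a := (sigmaL (iFin K) (ysharpFin K)).app ((iotaProFin K).obj Q)
      unit := sigmaL_unit (iFin K) (ysharpFin K) ((iotaProFin K).obj Q)
      assoc := sigmaL_assoc (iFin K) (ysharpFin K) ((iotaProFin K).obj Q) }
  map {Q Q'} g :=
    { f := (ranL (iFin K) (ysharpFin K)).map ((iotaProFin K).map g)
      h := by
        have := (sigmaL (iFin K) (ysharpFin K)).naturality ((iotaProFin K).map g)
        dsimp at this ⊢
        exact this }
  map_id Q := by
    apply Monad.Algebra.Hom.ext'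
    exact (ranL (iFin K) (ysharpFin K)).map_id ((iotaProFin K).obj Q)
  map_comp f g := by
    apply Monad.Algebra.Hom.ext'
    exact (ranL (iFin K) (ysharpFin K)).map_comp ((iotaProFin K).map f) ((iotaProFin K).map g)

instance essSmallSA (Y : (KFin K ⥤ Type u')ᵒᵖ) :
    EssentiallySmall.{u'} (StructuredArrow Y (ysharpFin K)) := by
  haveI hsm : ∀ a : KFin K, Small.{u'} (Y ⟶ (ysharpFin K).obj a) := fun a =>
    small_of_injective (f := fun g => coyonedaEquiv (Quiver.Hom.unop g))
      (fun g g' h => Quiver.Hom.unop_inj (coyonedaEquiv.injective h))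
  let e := equivSmallModel.{u'} (KFin K)
  haveI : ∀ s : SmallModel.{u'} (KFin K), Small.{u'} (Y ⟶ (e.inverse ⋙ ysharpFin K).obj s) :=
    fun s => hsm (e.inverse.obj s)
  haveI : EssentiallySmall.{u'} (StructuredArrow Y (e.inverse ⋙ ysharpFin K)) :=
    essSmallSA_aux (e.inverse ⋙ ysharpFin K) Y
  exact (essentiallySmall_congr
    (Functor.asEquivalence (StructuredArrow.pre Y e.inverse (ysharpFin K)))).mp ‹_›

lemma hasPw : (ysharpFin K).HasPointwiseRightKanExtension (iFin K) := fun Y => by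
  haveI : HasLimitsOfShape (StructuredArrow Y (ysharpFin K)) K :=
    hasLimitsOfShape_of_essentiallySmall _ K
  infer_instance

/-- The right Kan extension of `i` along `y♯`, as a right extension. -/
def RE : Functor.RightExtension (ysharpFin K) (iFin K) :=
  Functor.RightExtension.mk ((ysharpFin K).rightKanExtension (iFin K))
    ((ysharpFin K).rightKanExtensionCounit (iFin K))

/-- The Kan extension is pointwise. -/
def hPt (Y : (KFin K ⥤ Type u')ᵒᵖ) : IsLimit ((RE K).coneAt Y) := by
  haveI : (ysharpFin K).HasPointwiseRightKanExtension (iFin K) := hasPw K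
  exact Functor.isPointwiseRightKanExtensionOfIsRightKanExtension
    ((ysharpFin K).rightKanExtension (iFin K))
    ((ysharpFin K).rightKanExtensionCounit (iFin K)) Y

/-- The legs of the pointwise limit cones. -/
abbrev legS {Y : (KFin K ⥤ Type u')ᵒᵖ} (g : StructuredArrow Y (ysharpFin K)) :
    (ranL (iFin K) (ysharpFin K)).obj Y ⟶ (iFin K).obj g.right :=
  (ranL (iFin K) (ysharpFin K)).map g.hom ≫ (counitL (iFin K) (ysharpFin K)).app g.right

lemma coneAt_π (Y : (KFin K ⥤ Type u')ᵒᵖ) (g : StructuredArrow Y (ysharpFin K)) :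
    ((RE K).coneAt Y).π.app g = legS K g := rfl

lemma sS_leg {Y : (KFin K ⥤ Type u')ᵒᵖ} (g : StructuredArrow Y (ysharpFin K)) :
    (sigmaL (iFin K) (ysharpFin K)).app Y ≫ legS K g
      = (Codensity.T (iFin K)).map (legS K g) ≫ (Codensity.ε (iFin K)).app g.right := by
  have hnat := (sigmaL (iFin K) (ysharpFin K)).naturality g.hom
  dsimp at hnat
  rw [← Category.assoc, ← hnat, Category.assoc, sigmaL_fac, Functor.map_comp, Category.assoc]

lemma legS_mk {Y : (KFin K ⥤ Type u')ᵒᵖ} {a : KFin K} (m : Y ⟶ (ysharpFin K).obj a) :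
    legS K (StructuredArrow.mk m)
      = (ranL (iFin K) (ysharpFin K)).map m ≫ (counitL (iFin K) (ysharpFin K)).app a := rfl

lemma legS_comp {Y Y' : (KFin K ⥤ Type u')ᵒᵖ} (m : Y' ⟶ Y)
    (g : StructuredArrow Y (ysharpFin K)) :
    (ranL (iFin K) (ysharpFin K)).map m ≫ legS K g
      = legS K (StructuredArrow.mk (m ≫ g.hom)) := by
  show (ranL (iFin K) (ysharpFin K)).map m ≫ (ranL (iFin K) (ysharpFin K)).map g.hom ≫
      (counitL (iFin K) (ysharpFin K)).app g.right
    = (ranL (iFin K) (ysharpFin K)).map (m ≫ g.hom) ≫ (counitL (iFin K) (ysharpFin K)).app g.right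
  rw [Functor.map_comp, Category.assoc]

/-- The element of `Y.unop` associated to a structured arrow. -/
def elt {Y : (KFin K ⥤ Type u')ᵒᵖ} (g : StructuredArrow Y (ysharpFin K)) :
    Y.unop.obj g.right :=
  coyonedaEquiv g.hom.unop

/-- The structured arrow associated to an element of `Y.unop`. -/
def homOfElt {Y : (KFin K ⥤ Type u')ᵒᵖ} {a : KFin K} (x : Y.unop.obj a) :
    Y ⟶ (ysharpFin K).obj a :=
  (coyonedaEquiv.symm x).op

lemma elt_homOfElt {Y : (KFin K ⥤ Type u')ᵒᵖ} {a : KFin K} (x : Y.unop.obj a) :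
    elt K (StructuredArrow.mk (homOfElt K x)) = x := by
  exact coyonedaEquiv.apply_symm_apply x

lemma homOfElt_elt {Y : (KFin K ⥤ Type u')ᵒᵖ} (g : StructuredArrow Y (ysharpFin K)) :
    homOfElt K (elt K g) = g.hom := by
  exact congrArg Quiver.Hom.op (coyonedaEquiv.symm_apply_apply g.hom.unop)

lemma homOfElt_nat {Y : (KFin K ⥤ Type u')ᵒᵖ} {a b : KFin K} (h : a ⟶ b) (x : Y.unop.obj a) :
    homOfElt K (Y.unop.map h x) = homOfElt K x ≫ (ysharpFin K).map h := by
  rw [homOfElt, coyonedaEquiv_symm_map, op_comp]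
  rfl

lemma elt_nat {Y : (KFin K ⥤ Type u')ᵒᵖ} {g₁ g₂ : StructuredArrow Y (ysharpFin K)}
    (ψ : g₁ ⟶ g₂) : elt K g₂ = Y.unop.map ψ.right (elt K g₁) := by
  have hw : g₁.hom ≫ (ysharpFin K).map ψ.right = g₂.hom := StructuredArrow.w ψ
  rw [elt, elt, ← hw, unop_comp]
  exact (coyonedaEquiv_naturality _ _).symm

/-- The cone on the pointwise diagram induced by a natural transformation into `OFun K A`. -/
@[simps]
def coneOfNat {Y : (KFin K ⥤ Type u')ᵒᵖ} {A : (codensityMonad (iFin K)).Algebra}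
    (φ : Y.unop ⟶ OFun K A) :
    Cone (StructuredArrow.proj Y (ysharpFin K) ⋙ iFin K) where
  pt := A.A
  π :=
    { app := fun g => Subtype.val (φ.app g.right (elt K g))
      naturality := fun g₁ g₂ ψ => by
        dsimp
        have hφ := ConcreteCategory.congr_hom (φ.naturality ψ.right) (elt K g₁)
        dsimp at hφ
        rw [Category.id_comp, elt_nat K ψ, hφ]
        rfl }

/-- Forward direction of the adjunction hom-equivalence. -/
@[simps]
def fwdAlg {Q : ProFin K} {A : (codensityMonad (iFin K)).Algebra}
    (φ : ((iotaProFin K).obj Q).unop ⟶ OFun K A) : A ⟶ (CFun K).obj Q where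
  f := (hPt K ((iotaProFin K).obj Q)).lift (coneOfNat K φ)
  h := by
    apply (hPt K ((iotaProFin K).obj Q)).hom_ext
    intro g
    have hfac := (hPt K ((iotaProFin K).obj Q)).fac (coneOfNat K φ) g
    rw [coneAt_π] at hfac
    simp only [coneOfNat_π_app] at hfac
    rw [coneAt_π]
    simp only [codensityMonad_toFunctor, CFun_obj_a]
    conv_lhs => erw [Category.assoc, sS_leg, ← Category.assoc, ← Functor.map_comp, hfac,
      Subtype.property (φ.app g.right (elt K g))]
    conv_rhs => erw [Category.assoc, hfac]
    rfl

/-- Backward direction of the adjunction hom-equivalence. -/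
@[simps]
def bwdNat {Q : ProFin K} {A : (codensityMonad (iFin K)).Algebra}
    (f : A ⟶ (CFun K).obj Q) : ((iotaProFin K).obj Q).unop ⟶ OFun K A where
  app a := TypeCat.ofHom fun x => ⟨f.f ≫ legS K (StructuredArrow.mk (homOfElt K x)), by
    have hleg := sS_leg K (StructuredArrow.mk (homOfElt K x))
    rw [legS_mk] at hleg ⊢
    simp only [StructuredArrow.mk_right] at hleg
    have hf : (Codensity.T (iFin K)).map f.f ≫
        (sigmaL (iFin K) (ysharpFin K)).app ((iotaProFin K).obj Q) = A.a ≫ f.f := f.h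
    erw [Functor.map_comp, Category.assoc, ← hleg, ← Category.assoc, hf, Category.assoc]; rfl⟩
  naturality a b h := by
    refine ConcreteCategory.hom_ext _ _ fun x => ?_
    apply Subtype.ext
    have hd := (counitL (iFin K) (ysharpFin K)).naturality h
    dsimp at hd
    show f.f ≫ legS K (StructuredArrow.mk (homOfElt K ((((iotaProFin K).obj Q).unop).map h x)))
      = (f.f ≫ legS K (StructuredArrow.mk (homOfElt K x))) ≫ h.hom
    erw [homOfElt_nat, legS_mk, legS_mk, Functor.map_comp, Category.assoc, Category.assoc, hd]
    erw [Category.assoc]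
    rfl

/-- The hom-set equivalence of the adjunction. -/
def homEquivLC (hclosed : HCl K) (A : (codensityMonad (iFin K)).Algebra) (Q : ProFin K) :
    ((LFun K hclosed).obj A ⟶ Q) ≃ (A ⟶ (CFun K).obj Q) where
  toFun φ := fwdAlg K φ.unop.hom
  invFun f := Quiver.Hom.op (show Q.unop ⟶ (⟨OFun K A, OFun_lex K hclosed A⟩ :
      ObjectProperty.FullSubcategory fun R : KFin K ⥤ Type u' => PreservesFiniteLimits R) from
      ObjectProperty.homMk (bwdNat K f))
  left_inv φ := by
    apply Quiver.Hom.unop_inj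
    simp only [Quiver.Hom.unop_op]
    apply ObjectProperty.hom_ext
    apply NatTrans.ext
    funext a
    refine ConcreteCategory.hom_ext _ _ fun x => ?_
    apply Subtype.ext
    have hfac := (hPt K ((iotaProFin K).obj Q)).fac
      (coneOfNat K (Y := (iotaProFin K).obj Q) φ.unop.hom) (StructuredArrow.mk (homOfElt K x))
    rw [coneAt_π] at hfac
    refine hfac.trans ?_
    show Subtype.val ((φ.unop.hom.app a) (elt K (Y := (iotaProFin K).obj Q) (StructuredArrow.mk (homOfElt K x)))) = _
    rw [elt_homOfElt]
    rfl
  right_inv f := by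
    apply Monad.Algebra.Hom.ext'
    simp only [Quiver.Hom.unop_op, fwdAlg_f]
    apply (hPt K ((iotaProFin K).obj Q)).hom_ext
    intro g
    have hfac := (hPt K ((iotaProFin K).obj Q)).fac
      (coneOfNat K (Y := (iotaProFin K).obj Q) (bwdNat K f)) g
    rw [coneAt_π] at hfac
    erw [coneAt_π, hfac]
    show f.f ≫ legS K (StructuredArrow.mk (homOfElt K (elt K g))) = _
    have e : legS K (StructuredArrow.mk (homOfElt K (elt K g))) = legS K g := by
      rw [homOfElt_elt]
      rfl
    exact congrArg (f.f ≫ ·) e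

/-- The adjunction `L ⊣ C`. -/
def adjLC (hclosed : HCl K) : LFun K hclosed ⊣ CFun K :=
  Adjunction.mkOfHomEquiv
    { homEquiv := fun A Q => homEquivLC K hclosed A Q
      homEquiv_naturality_left_symm := by
        intro A' A Q f g
        apply Quiver.Hom.unop_inj
        apply ObjectProperty.hom_ext
        apply NatTrans.ext
        funext a
        refine ConcreteCategory.hom_ext _ _ fun x => ?_
        apply Subtype.ext
        exact Category.assoc f.f g.f (legS K (StructuredArrow.mk (homOfElt K x)))
      homEquiv_naturality_right := by
        intro A Q Q' f g
        apply Monad.Algebra.Hom.ext'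
        simp only [homEquivLC, Equiv.coe_fn_mk, Monad.Algebra.comp_f, CFun_map_f, fwdAlg_f]
        apply (hPt K ((iotaProFin K).obj Q')).hom_ext
        intro h
        have hfac₁ := (hPt K ((iotaProFin K).obj Q')).fac
          (coneOfNat K (Y := (iotaProFin K).obj Q') (f ≫ g).unop.hom) h
        rw [coneAt_π] at hfac₁
        have hfac₂ := (hPt K ((iotaProFin K).obj Q)).fac
          (coneOfNat K (Y := (iotaProFin K).obj Q) f.unop.hom)
          (StructuredArrow.mk ((iotaProFin K).map g ≫ h.hom))
        rw [coneAt_π] at hfac₂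
        erw [coneAt_π, hfac₁, Category.assoc, legS_comp, hfac₂]
        show Subtype.val (((f ≫ g).unop.hom.app h.right) (elt K h)) =
          Subtype.val ((f.unop.hom.app (StructuredArrow.mk ((iotaProFin K).map g ≫ h.hom)).right)
            (elt K (StructuredArrow.mk ((iotaProFin K).map g ≫ h.hom))))
        have helt : elt K (StructuredArrow.mk ((iotaProFin K).map g ≫ h.hom))
            = g.unop.hom.app h.right (elt K h) := by
          simp only [elt]
          rw [StructuredArrow.mk_hom_eq_self, unop_comp]
          erw [coyonedaEquiv_comp]
        rw [helt]
        rfl }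

end Stmt6Aux


theorem algebras_of_codensity_adjunction_with_pro_completion
    -- `K` is locally finitely presentable: it is cocomplete (hence also complete), and
    -- `K_ω` is essentially small and dense in `K`:
    [HasColimitsOfSize.{u', u'} K] [HasLimitsOfSize.{u', u'} K]
    [EssentiallySmall.{u'} (KFin K)]
    [(Presheaf.restrictedYoneda (iFin K)).Full] [(Presheaf.restrictedYoneda (iFin K)).Faithful]
    -- `K_ω` is closed under finite limits in `K`:
    (hclosed : ∀ (J : Type u') (_ : SmallCategory J) (_ : FinCategory J) (D : J ⥤ K),
      (∀ j, FinitelyPresentable K (D.obj j)) → FinitelyPresentable K (limit D))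
    -- the relevant right Kan extensions exist:
    [(iFin K).HasRightKanExtension (iFin K)]
    [(ysharpFin K).HasRightKanExtension (iFin K)] :
    Nonempty (Σ' (L : (codensityMonad (iFin K)).Algebra ⥤ ProFin K)
      (C : ProFin K ⥤ (codensityMonad (iFin K)).Algebra) (_ : L ⊣ C),
        -- the right adjoint `C` lifts the restricted Isbell functor `𝒮`:
        C ⋙ (codensityMonad (iFin K)).forget ≅
          iotaProFin K ⋙ (ysharpFin K).rightKanExtension (iFin K)) := by
  exact ⟨⟨LFun K hclosed, CFun K, adjLC K hclosed, Iso.refl _⟩⟩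

end
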